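/- Let G ∼ G(n, 1/2). Fix S ⊆ V with |S| = k even and 0 < k < n, and set S̄ = V \ S. Fix vertices s ∈ S and t ∈ S̄. Then, conditioned on the event that the set of odd-degree vertices of G equals S, the triple consisting of the induced subgraph G[S], the induced subgraph G[S̄], and the bipartite graph of edges between S \ {s} and S̄ \ {t} is distributed as independent samples from G(k, 1/2), G(n−k, 1/2), and the bipartite random graph G(k−1, n−k−1, 1/2), respectively. -/

import Mathlib

/-- Index type for the potential edges of a simple graph on `Fin n`. -/
abbrev EdgeIdx (n : ℕ) := {p : Fin n × Fin n // p.1 < p.2}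

/-- The degree of vertex `u` in the graph described by the edge-indicator `g`. -/
def gDegree (n : ℕ) (g : EdgeIdx n → Bool) (u : Fin n) : ℕ :=
  (Finset.univ.filter fun e : EdgeIdx n => g e = true ∧ (e.1.1 = u ∨ e.1.2 = u)).card

/-- The set of odd-degree vertices of the graph described by `g`. -/
def oddSet (n : ℕ) (g : EdgeIdx n → Bool) : Finset (Fin n) :=
  Finset.univ.filter fun u => Odd (gDegree n g u)

namespace Stmt6
open Finset

abbrev inc {n : ℕ} (u : Fin n) (e : EdgeIdx n) : Prop := e.1.1 = u ∨ e.1.2 = u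

lemma endpoints_ne {n : ℕ} (e : EdgeIdx n) : e.1.1 ≠ e.1.2 := ne_of_lt e.2

lemma edge_unique {n : ℕ} {u w : Fin n} (huw : u ≠ w) {e e' : EdgeIdx n}
    (h1 : inc u e) (h2 : inc w e) (h1' : inc u e') (h2' : inc w e') : e = e' := by
  have l : (e.1.1 : ℕ) < e.1.2 := e.2
  have l' : (e'.1.1 : ℕ) < e'.1.2 := e'.2
  have huw' : (u : ℕ) ≠ w := fun h => huw (Fin.ext h)
  have v1 : ((e.1.1 : ℕ) = u ∨ (e.1.2 : ℕ) = u) := by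
    rcases h1 with h|h <;> [left; right] <;> exact congrArg Fin.val h
  have v2 : ((e.1.1 : ℕ) = w ∨ (e.1.2 : ℕ) = w) := by
    rcases h2 with h|h <;> [left; right] <;> exact congrArg Fin.val h
  have v1' : ((e'.1.1 : ℕ) = u ∨ (e'.1.2 : ℕ) = u) := by
    rcases h1' with h|h <;> [left; right] <;> exact congrArg Fin.val h
  have v2' : ((e'.1.1 : ℕ) = w ∨ (e'.1.2 : ℕ) = w) := by
    rcases h2' with h|h <;> [left; right] <;> exact congrArg Fin.val h
  apply Subtype.ext
  apply Prod.ext <;> apply Fin.ext <;> omega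

lemma gDegree_eq_sum {n : ℕ} (g : EdgeIdx n → Bool) (u : Fin n) :
    gDegree n g u = ∑ e : EdgeIdx n, (if g e = true ∧ inc u e then 1 else 0) := by
  rw [gDegree, Finset.card_filter]

lemma deg_split {n : ℕ} (g : EdgeIdx n → Bool) (u : Fin n) (e₀ : EdgeIdx n) (h₀ : inc u e₀) :
    gDegree n g u =
      ((Finset.univ.erase e₀).filter fun e => g e = true ∧ inc u e).card
        + (if g e₀ = true then 1 else 0) := by
  rw [gDegree_eq_sum, ← Finset.sum_erase_add _ _ (mem_univ e₀), Finset.card_filter]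
  congr 1
  simp [h₀]

lemma deg_congr_off {n : ℕ} {g g' : EdgeIdx n → Bool} {u : Fin n} {e₀ : EdgeIdx n}
    (hagree : ∀ e, inc u e → e ≠ e₀ → g e = g' e) :
    ((Finset.univ.erase e₀).filter fun e => g e = true ∧ inc u e).card =
    ((Finset.univ.erase e₀).filter fun e => g' e = true ∧ inc u e).card := by
  congr 1
  apply filter_congr
  intro e he
  rcases mem_erase.mp he with ⟨hne, -⟩
  by_cases hi : inc u e
  · rw [hagree e hi hne]
  · simp [hi]

lemma single_edge {n : ℕ} {g g' : EdgeIdx n → Bool} {u : Fin n} {e₀ : EdgeIdx n}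
    (h₀ : inc u e₀) (hagree : ∀ e, inc u e → e ≠ e₀ → g e = g' e)
    (hpar : Odd (gDegree n g u) ↔ Odd (gDegree n g' u)) : g e₀ = g' e₀ := by
  rw [deg_split g u e₀ h₀, deg_split g' u e₀ h₀, deg_congr_off hagree] at hpar
  rcases hb : g e₀ <;> rcases hb' : g' e₀ <;>
    simp [hb, hb', Nat.odd_iff] at hpar ⊢ <;> omega

lemma bit_lemma {n : ℕ} (S : Finset (Fin n)) {g b : EdgeIdx n → Bool} {u : Fin n}
    {e₀ : EdgeIdx n} (h₀ : inc u e₀) (hagree : ∀ e, inc u e → e ≠ e₀ → g e = b e)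
    (hb : b e₀ = false) :
    ((Odd (gDegree n g u) ↔ u ∈ S) ↔
      (g e₀ = ((decide (u ∈ S)) != decide (Odd (gDegree n b u))))) := by
  rw [deg_split g u e₀ h₀, deg_split b u e₀ h₀, deg_congr_off hagree, hb]
  cases hg : g e₀ <;> by_cases hS : u ∈ S <;>
    simp [hS, hg, Nat.odd_iff] <;> omega

lemma oddSet_eq_iff {n : ℕ} (g : EdgeIdx n → Bool) (S : Finset (Fin n)) :
    oddSet n g = S ↔ ∀ u, (Odd (gDegree n g u) ↔ u ∈ S) := by
  rw [Finset.ext_iff]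
  apply forall_congr'
  intro u
  simp [oddSet]

lemma zmod_odd_iff (m : ℕ) : (m : ZMod 2) = 1 ↔ Odd m := by
  rw [Nat.odd_iff, ← ZMod.natCast_mod m 2]
  rcases Nat.mod_two_eq_zero_or_one m with h|h <;> rw [h] <;> simp

lemma zmod_even_iff (m : ℕ) : (m : ZMod 2) = 0 ↔ ¬ Odd m := by
  rw [Nat.odd_iff, ← ZMod.natCast_mod m 2]
  rcases Nat.mod_two_eq_zero_or_one m with h|h <;> rw [h] <;> simp

lemma handshake {n : ℕ} (g : EdgeIdx n → Bool) :
    ∑ u : Fin n, ((gDegree n g u : ZMod 2)) = 0 := by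
  have key : ∀ u : Fin n, ((gDegree n g u : ZMod 2))
      = ∑ e : EdgeIdx n, (if g e = true ∧ inc u e then (1 : ZMod 2) else 0) := by
    intro u
    rw [gDegree_eq_sum]
    push_cast [apply_ite (Nat.cast : ℕ → ZMod 2)]
    rfl
  simp only [key]
  rw [Finset.sum_comm]
  apply Finset.sum_eq_zero
  intro e _
  by_cases hg : g e = true
  · have h2 : ∀ u : Fin n, (if g e = true ∧ inc u e then (1 : ZMod 2) else 0)
        = if u ∈ ({e.1.1, e.1.2} : Finset (Fin n)) then 1 else 0 := by
      intro u
      simp only [hg, true_and, inc, mem_insert, mem_singleton]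
      congr 1
      simp [eq_comm]
    simp only [h2]
    rw [Finset.sum_ite_mem, Finset.univ_inter, Finset.sum_const,
      Finset.card_pair (endpoints_ne e)]
    decide
  · simp [hg]

def mkEdge {n : ℕ} (u v : Fin n) (h : u ≠ v) : EdgeIdx n :=
  if h' : u < v then ⟨(u, v), h'⟩
  else ⟨(v, u), by
    rcases lt_or_gt_of_ne h with h''|h''
    · exact absurd h'' h'
    · exact h''⟩

lemma mkEdge_inc_left {n : ℕ} (u v : Fin n) (h : u ≠ v) : inc u (mkEdge u v h) := by
  unfold mkEdge; split <;> simp [inc]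

lemma mkEdge_inc_right {n : ℕ} (u v : Fin n) (h : u ≠ v) : inc v (mkEdge u v h) := by
  unfold mkEdge; split <;> simp [inc]

lemma other_eq {n : ℕ} {e : EdgeIdx n} {u t : Fin n} (hut : u ≠ t)
    (hu : inc u e) (ht : inc t e) : (if e.1.1 = t then e.1.2 else e.1.1) = u := by
  have hne := endpoints_ne e
  rcases hu with hu|hu <;> rcases ht with ht|ht <;> simp_all

lemma count_pairs {n : ℕ} (Q : Fin n → Prop) [DecidablePred Q] :
    (univ.filter fun e : EdgeIdx n => Q e.1.1 ∧ Q e.1.2).card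
      = ((univ.filter Q).card).choose 2 := by
  rw [← Finset.card_powersetCard 2 (univ.filter Q)]
  apply Finset.card_bij (i := fun (e : EdgeIdx n) (_ : e ∈ univ.filter
      fun e : EdgeIdx n => Q e.1.1 ∧ Q e.1.2) => ({e.1.1, e.1.2} : Finset (Fin n)))
  · intro e he
    rcases mem_filter.mp he with ⟨-, hQ1, hQ2⟩
    rw [Finset.mem_powersetCard]
    constructor
    · intro x hx
      rcases Finset.mem_insert.mp hx with h|h
      · subst h; exact mem_filter.mpr ⟨mem_univ _, hQ1⟩
      · rw [Finset.mem_singleton.mp h]; exact mem_filter.mpr ⟨mem_univ _, hQ2⟩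
    · exact Finset.card_pair (ne_of_lt e.2)
  · intro e1 h1 e2 h2 heq
    have m1 : e1.1.1 ∈ ({e2.1.1, e2.1.2} : Finset (Fin n)) := by
      rw [← heq]; simp
    have m2 : e1.1.2 ∈ ({e2.1.1, e2.1.2} : Finset (Fin n)) := by
      rw [← heq]; simp
    have m3 : e2.1.1 ∈ ({e1.1.1, e1.1.2} : Finset (Fin n)) := by
      rw [heq]; simp
    simp only [Finset.mem_insert, Finset.mem_singleton] at m1 m2 m3
    have l1 : (e1.1.1 : ℕ) < e1.1.2 := e1.2
    have l2 : (e2.1.1 : ℕ) < e2.1.2 := e2.2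
    have v1 : (e1.1.1 : ℕ) = e2.1.1 ∨ (e1.1.1 : ℕ) = e2.1.2 := by
      rcases m1 with h|h <;> [left; right] <;> exact congrArg Fin.val h
    have v2 : (e1.1.2 : ℕ) = e2.1.1 ∨ (e1.1.2 : ℕ) = e2.1.2 := by
      rcases m2 with h|h <;> [left; right] <;> exact congrArg Fin.val h
    have v3 : (e2.1.1 : ℕ) = e1.1.1 ∨ (e2.1.1 : ℕ) = e1.1.2 := by
      rcases m3 with h|h <;> [left; right] <;> exact congrArg Fin.val h
    apply Subtype.ext; apply Prod.ext <;> apply Fin.ext <;> omega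
  · intro p hp
    rw [Finset.mem_powersetCard] at hp
    rcases hp with ⟨hsub, hcard⟩
    rcases Finset.card_eq_two.mp hcard with ⟨a, b, hab, rfl⟩
    have ha : Q a := (mem_filter.mp (hsub (by simp))).2
    have hb : Q b := (mem_filter.mp (hsub (by simp))).2
    rcases lt_or_gt_of_ne hab with h|h
    · exact ⟨⟨(a, b), h⟩, mem_filter.mpr ⟨mem_univ _, ha, hb⟩, rfl⟩
    · exact ⟨⟨(b, a), h⟩, mem_filter.mpr ⟨mem_univ _, hb, ha⟩,
        by simp [Finset.pair_comm]⟩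

lemma card_edges {n : ℕ} : (univ : Finset (EdgeIdx n)).card = n.choose 2 := by
  have h := count_pairs (n := n) (fun _ => True)
  simpa using h

lemma count_nonT {n : ℕ} (t : Fin n) :
    (univ.filter fun e : EdgeIdx n => e.1.1 ≠ t ∧ e.1.2 ≠ t).card = (n - 1).choose 2 := by
  rw [count_pairs (fun u => u ≠ t)]
  congr 1
  rw [Finset.filter_ne', Finset.card_erase_of_mem (mem_univ _)]
  simp


def baseFun {n : ℕ} (t : Fin n) (h : {e : EdgeIdx n // e.1.1 ≠ t ∧ e.1.2 ≠ t} → Bool) :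
    EdgeIdx n → Bool :=
  fun e => if he : e.1.1 ≠ t ∧ e.1.2 ≠ t then h ⟨e, he⟩ else false

def extFun {n : ℕ} (S : Finset (Fin n)) (t : Fin n)
    (h : {e : EdgeIdx n // e.1.1 ≠ t ∧ e.1.2 ≠ t} → Bool) : EdgeIdx n → Bool :=
  fun e => if he : e.1.1 ≠ t ∧ e.1.2 ≠ t then h ⟨e, he⟩ else
    (decide ((if e.1.1 = t then e.1.2 else e.1.1) ∈ S))
      != decide (Odd (gDegree n (baseFun t h) (if e.1.1 = t then e.1.2 else e.1.1)))

lemma extFun_agree {n : ℕ} (S : Finset (Fin n)) (t : Fin n)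
    (h : {e : EdgeIdx n // e.1.1 ≠ t ∧ e.1.2 ≠ t} → Bool)
    {u : Fin n} (hut : u ≠ t) {e₀ : EdgeIdx n} (hu0 : inc u e₀) (ht0 : inc t e₀) :
    ∀ e, inc u e → e ≠ e₀ → extFun S t h e = baseFun t h e := by
  intro e hi hne
  have hnt : e.1.1 ≠ t ∧ e.1.2 ≠ t := by
    by_contra hc
    push_neg at hc
    have hti : inc t e := by
      by_cases h1 : e.1.1 = t
      · exact Or.inl h1
      · exact Or.inr (hc h1)
    exact hne (edge_unique hut hi hti hu0 ht0)
  simp [extFun, baseFun, hnt]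

lemma ext_parity {n : ℕ} (S : Finset (Fin n)) (t : Fin n)
    (h : {e : EdgeIdx n // e.1.1 ≠ t ∧ e.1.2 ≠ t} → Bool)
    {u : Fin n} (hut : u ≠ t) :
    Odd (gDegree n (extFun S t h) u) ↔ u ∈ S := by
  set e₀ := mkEdge u t hut with he₀
  have hu0 : inc u e₀ := mkEdge_inc_left u t hut
  have ht0 : inc t e₀ := mkEdge_inc_right u t hut
  have hEt : ¬(e₀.1.1 ≠ t ∧ e₀.1.2 ≠ t) := by
    rcases ht0 with h'|h' <;> tauto
  have hbase : baseFun t h e₀ = false := by simp [baseFun, hEt]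
  apply (bit_lemma S hu0 (extFun_agree S t h hut hu0 ht0) hbase).mpr
  show extFun S t h e₀ = _
  simp only [extFun]
  rw [dif_neg hEt, other_eq hut hu0 ht0]

lemma even_card_cast {n : ℕ} {S : Finset (Fin n)} (hcard : Even S.card) :
    ((S.card : ℕ) : ZMod 2) = 0 := by
  obtain ⟨m, hm⟩ := hcard
  rw [hm]
  push_cast
  exact CharTwo.add_self_eq_zero _

lemma parity_at_t {n : ℕ} (S : Finset (Fin n)) (t : Fin n) (ht : t ∉ S)
    (hcard : Even S.card) (g : EdgeIdx n → Bool)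
    (hv : ∀ u, u ≠ t → (Odd (gDegree n g u) ↔ u ∈ S)) :
    ¬ Odd (gDegree n g t) := by
  have hs := handshake g
  rw [← Finset.sum_erase_add _ _ (mem_univ t)] at hs
  have he : ∀ u ∈ univ.erase t, ((gDegree n g u : ZMod 2)) = if u ∈ S then 1 else 0 := by
    intro u hu
    rcases mem_erase.mp hu with ⟨hne, -⟩
    by_cases huS : u ∈ S
    · rw [if_pos huS]
      exact zmod_odd_iff _ |>.mpr ((hv u hne).mpr huS)
    · rw [if_neg huS]
      exact zmod_even_iff _ |>.mpr (fun ho => huS ((hv u hne).mp ho))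
  rw [Finset.sum_congr rfl he, Finset.sum_boole] at hs
  have hfil : (univ.erase t).filter (· ∈ S) = S := by
    ext x
    simp only [mem_filter, mem_erase, mem_univ, true_and, and_true]
    constructor
    · tauto
    · intro hx
      exact ⟨fun hxt => ht (hxt ▸ hx), hx⟩
  rw [hfil, even_card_cast hcard, zero_add] at hs
  exact (zmod_even_iff _).mp hs

lemma ext_oddSet {n : ℕ} (S : Finset (Fin n)) (t : Fin n) (ht : t ∉ S)
    (hcard : Even S.card) (h : {e : EdgeIdx n // e.1.1 ≠ t ∧ e.1.2 ≠ t} → Bool) :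
    oddSet n (extFun S t h) = S := by
  rw [oddSet_eq_iff]
  intro u
  by_cases hut : u = t
  · subst hut
    constructor
    · intro ho
      exact absurd ho (parity_at_t S u ht hcard _ (fun v hv => ext_parity S u h hv))
    · intro hu
      exact absurd hu ht
  · exact ext_parity S t h hut

lemma den_card {n : ℕ} (S : Finset (Fin n)) (t : Fin n) (ht : t ∉ S) (hcard : Even S.card) :
    (univ.filter fun g : EdgeIdx n → Bool => oddSet n g = S).card = 2 ^ ((n - 1).choose 2) := by
  have hbij : (univ.filter fun g : EdgeIdx n → Bool => oddSet n g = S).card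
      = (univ : Finset ({e : EdgeIdx n // e.1.1 ≠ t ∧ e.1.2 ≠ t} → Bool)).card := by
    apply Finset.card_nbij' (i := fun g (e : {e : EdgeIdx n // e.1.1 ≠ t ∧ e.1.2 ≠ t}) => g e.1)
      (j := fun h => extFun S t h)
    · intro g _
      exact mem_univ _
    · intro h _
      exact mem_filter.mpr ⟨mem_univ _, ext_oddSet S t ht hcard h⟩
    · -- left inverse : extFun S t (restriction of g) = g
      intro g hg
      have hodd := (oddSet_eq_iff g S).mp (mem_filter.mp hg).2
      funext e
      by_cases he : e.1.1 ≠ t ∧ e.1.2 ≠ t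
      · simp [extFun, he]
      · -- e is incident to t
        have hti : inc t e := by
          by_cases h1 : e.1.1 = t
          · exact Or.inl h1
          · push_neg at he
            exact Or.inr (he h1)
        set u := if e.1.1 = t then e.1.2 else e.1.1 with hu_def
        have hune : u ≠ t := by
          have hne := endpoints_ne e
          rcases hti with h'|h' <;> simp [hu_def, h'] <;> simp_all [eq_comm]
        have hui : inc u e := by
          rcases hti with h'|h' <;> simp [hu_def, h']
          · right; rfl
          · have : e.1.1 ≠ t := fun hc => (endpoints_ne e) (hc.trans h'.symm)
            simp [this]
            left; rfl
        have hou : (if e.1.1 = t then e.1.2 else e.1.1) = u := rfl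
        have hbase : baseFun t (fun (e' : {e : EdgeIdx n // e.1.1 ≠ t ∧ e.1.2 ≠ t}) => g e'.1) e = false := by
          simp [baseFun, he]
        have hagree : ∀ e', inc u e' → e' ≠ e →
            g e' = baseFun t (fun (e' : {e : EdgeIdx n // e.1.1 ≠ t ∧ e.1.2 ≠ t}) => g e'.1) e' := by
          intro e' hi hne
          have hnt : e'.1.1 ≠ t ∧ e'.1.2 ≠ t := by
            by_contra hc
            push_neg at hc
            have hti' : inc t e' := by
              by_cases h1 : e'.1.1 = t
              · exact Or.inl h1
              · exact Or.inr (hc h1)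
            exact hne (edge_unique hune hi hti' hui hti)
          simp [baseFun, hnt]
        have hbit := (bit_lemma S hui hagree hbase).mp (hodd u)
        show extFun S t _ e = g e
        simp only [extFun]
        rw [dif_neg he, hou, ← hbit]
    · intro h _
      funext e
      simp [extFun, e.2]
  rw [hbij]
  rw [Finset.card_univ, Fintype.card_fun, Fintype.card_bool, Fintype.card_subtype]
  congr 1
  exact count_nonT t

def Fx {n : ℕ} (S : Finset (Fin n)) (s t : Fin n) (e : EdgeIdx n) : Prop :=
  (e.1.1 ∈ S ∧ e.1.2 ∈ S) ∨ (e.1.1 ∉ S ∧ e.1.2 ∉ S) ∨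
  ((e.1.1 ∈ S ∧ e.1.1 ≠ s ∧ e.1.2 ∉ S ∧ e.1.2 ≠ t) ∨
   (e.1.2 ∈ S ∧ e.1.2 ≠ s ∧ e.1.1 ∉ S ∧ e.1.1 ≠ t))

instance FxDec {n : ℕ} (S : Finset (Fin n)) (s t : Fin n) : DecidablePred (Fx S s t) :=
  fun e => by unfold Fx; exact inferInstance

lemma inj_on_fixed {n : ℕ} {S : Finset (Fin n)} {s t : Fin n} (hs : s ∈ S) (ht : t ∉ S)
    {g g' : EdgeIdx n → Bool} (hg : oddSet n g = S) (hg' : oddSet n g' = S)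
    (hagree : ∀ e, Fx S s t e → g e = g' e) : g = g' := by
  rw [oddSet_eq_iff] at hg hg'
  have hpar : ∀ u, (Odd (gDegree n g u) ↔ Odd (gDegree n g' u)) :=
    fun u => (hg u).trans (hg' u).symm
  have hst : s ≠ t := fun hc => ht (hc ▸ hs)
  have stage1 : ∀ u, u ∉ S → u ≠ t → ∀ e0, inc u e0 → inc s e0 → g e0 = g' e0 := by
    intro u hu hut e0 hue0 hse0
    have hus : u ≠ s := fun hc => hu (hc ▸ hs)
    apply single_edge hue0 _ (hpar u)
    intro e hi hne
    apply hagree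
    rcases hi with h1|h1
    · have hws : e.1.2 ≠ s := by
        intro hc
        exact hne (edge_unique hus (Or.inl h1) (Or.inr hc) hue0 hse0)
      by_cases hwS : e.1.2 ∈ S
      · exact Or.inr (Or.inr (Or.inr ⟨hwS, hws, by rw [h1]; exact hu, by rw [h1]; exact hut⟩))
      · exact Or.inr (Or.inl ⟨by rw [h1]; exact hu, hwS⟩)
    · have hws : e.1.1 ≠ s := by
        intro hc
        exact hne (edge_unique hus (Or.inr h1) (Or.inl hc) hue0 hse0)
      by_cases hwS : e.1.1 ∈ S
      · exact Or.inr (Or.inr (Or.inl ⟨hwS, hws, by rw [h1]; exact hu, by rw [h1]; exact hut⟩))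
      · exact Or.inr (Or.inl ⟨hwS, by rw [h1]; exact hu⟩)
  have stage2 : ∀ v, v ∈ S → v ≠ s → ∀ e0, inc v e0 → inc t e0 → g e0 = g' e0 := by
    intro v hv hvs e0 hve0 hte0
    have hvt : v ≠ t := fun hc => ht (hc ▸ hv)
    apply single_edge hve0 _ (hpar v)
    intro e hi hne
    apply hagree
    rcases hi with h1|h1
    · have hwt : e.1.2 ≠ t := by
        intro hc
        exact hne (edge_unique hvt (Or.inl h1) (Or.inr hc) hve0 hte0)
      by_cases hwS : e.1.2 ∈ S
      · exact Or.inl ⟨by rw [h1]; exact hv, hwS⟩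
      · exact Or.inr (Or.inr (Or.inl ⟨by rw [h1]; exact hv, by rw [h1]; exact hvs, hwS, hwt⟩))
    · have hwt : e.1.1 ≠ t := by
        intro hc
        exact hne (edge_unique hvt (Or.inr h1) (Or.inl hc) hve0 hte0)
      by_cases hwS : e.1.1 ∈ S
      · exact Or.inl ⟨hwS, by rw [h1]; exact hv⟩
      · exact Or.inr (Or.inr (Or.inr ⟨by rw [h1]; exact hv, by rw [h1]; exact hvs, hwS, hwt⟩))
  have stage3 : ∀ e0, inc s e0 → inc t e0 → g e0 = g' e0 := by
    intro e0 hse0 hte0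
    apply single_edge hse0 _ (hpar s)
    intro e hi hne
    rcases hi with h1|h1
    · have hwt : e.1.2 ≠ t := by
        intro hc
        exact hne (edge_unique hst (Or.inl h1) (Or.inr hc) hse0 hte0)
      by_cases hwS : e.1.2 ∈ S
      · exact hagree e (Or.inl ⟨by rw [h1]; exact hs, hwS⟩)
      · exact stage1 e.1.2 hwS hwt e (Or.inr rfl) (Or.inl h1)
    · have hwt : e.1.1 ≠ t := by
        intro hc
        exact hne (edge_unique hst (Or.inr h1) (Or.inl hc) hse0 hte0)
      by_cases hwS : e.1.1 ∈ S
      · exact hagree e (Or.inl ⟨hwS, by rw [h1]; exact hs⟩)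
      · exact stage1 e.1.1 hwS hwt e (Or.inl rfl) (Or.inr h1)
  funext e
  by_cases hF : Fx S s t e
  · exact hagree e hF
  · unfold Fx at hF
    by_cases h1 : e.1.1 ∈ S <;> by_cases h2 : e.1.2 ∈ S
    · exact absurd (Or.inl ⟨h1, h2⟩) hF
    · -- cross, fst in S
      by_cases h1s : e.1.1 = s
      · by_cases h2t : e.1.2 = t
        · exact stage3 e (Or.inl h1s) (Or.inr h2t)
        · exact stage1 e.1.2 h2 h2t e (Or.inr rfl) (Or.inl h1s)
      · have h2t : e.1.2 = t := by
          by_contra h2t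
          exact hF (Or.inr (Or.inr (Or.inl ⟨h1, h1s, h2, h2t⟩)))
        exact stage2 e.1.1 h1 h1s e (Or.inl rfl) (Or.inr h2t)
    · -- cross, snd in S
      by_cases h2s : e.1.2 = s
      · by_cases h1t : e.1.1 = t
        · exact stage3 e (Or.inr h2s) (Or.inl h1t)
        · exact stage1 e.1.1 h1 h1t e (Or.inl rfl) (Or.inr h2s)
      · have h1t : e.1.1 = t := by
          by_contra h1t
          exact hF (Or.inr (Or.inr (Or.inr ⟨h2, h2s, h1, h1t⟩)))
        exact stage2 e.1.2 h2 h2s e (Or.inr rfl) (Or.inl h1t)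
    · exact absurd (Or.inr (Or.inl ⟨h1, h2⟩)) hF

lemma mkEdge_cases {n : ℕ} (u v : Fin n) (h : u ≠ v) :
    (mkEdge u v h).1 = (u, v) ∨ (mkEdge u v h).1 = (v, u) := by
  unfold mkEdge; split <;> simp

lemma count_notFx {n : ℕ} (S : Finset (Fin n)) (s t : Fin n) (hs : s ∈ S) (ht : t ∉ S) :
    (univ.filter fun e : EdgeIdx n => ¬ Fx S s t e).card = n - 1 := by
  have hst : s ≠ t := fun hc => ht (hc ▸ hs)
  have hcard : (univ.erase s).card = n - 1 := by
    rw [Finset.card_erase_of_mem (mem_univ _)]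
    simp
  rw [← hcard]
  apply Finset.card_nbij'
    (i := fun e : EdgeIdx n =>
      if e.1.1 = s then e.1.2 else if e.1.2 = s then e.1.1 else
        if e.1.1 = t then e.1.2 else e.1.1)
    (j := fun u => if hu : u ∈ S then mkEdge u t (fun hc => ht (hc ▸ hu))
      else mkEdge s u (fun hc => hu (hc ▸ hs)))
  · -- hi
    intro e he
    beta_reduce
    rcases mem_filter.mp he with ⟨-, hF⟩
    unfold Fx at hF
    rw [Finset.mem_coe, mem_erase]
    refine ⟨?_, mem_univ _⟩
    by_cases h1 : e.1.1 ∈ S <;> by_cases h2 : e.1.2 ∈ S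
    · exact absurd (Or.inl ⟨h1, h2⟩) hF
    · by_cases h1s : e.1.1 = s
      · rw [if_pos h1s]
        exact fun hc => h2 (hc ▸ hs)
      · rw [if_neg h1s, if_neg (fun hc : e.1.2 = s => h2 (hc ▸ hs)),
          if_neg (fun hc : e.1.1 = t => ht (hc ▸ h1))]
        exact h1s
    · by_cases h2s : e.1.2 = s
      · rw [if_neg (fun hc : e.1.1 = s => h1 (hc ▸ hs)), if_pos h2s]
        exact fun hc => h1 (hc ▸ hs)
      · have h1t : e.1.1 = t := by
          by_contra h1t
          exact hF (Or.inr (Or.inr (Or.inr ⟨h2, h2s, h1, h1t⟩)))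
        rw [if_neg (fun hc : e.1.1 = s => h1 (hc ▸ hs)), if_neg h2s, if_pos h1t]
        exact h2s
    · exact absurd (Or.inr (Or.inl ⟨h1, h2⟩)) hF
  · -- hj
    intro u hu
    beta_reduce
    rw [Finset.mem_coe, mem_filter]
    refine ⟨mem_univ _, ?_⟩
    rcases mem_erase.mp hu with ⟨hus, -⟩
    by_cases huS : u ∈ S
    · rw [dif_pos huS]
      rcases mkEdge_cases u t (fun hc => ht (hc ▸ huS)) with hp|hp <;>
        unfold Fx <;>
        rw [show _ = (_, _) from hp] <;>
        simp <;>
        tauto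
    · rw [dif_neg huS]
      rcases mkEdge_cases s u (fun hc => huS (hc ▸ hs)) with hp|hp <;>
        unfold Fx <;>
        rw [show _ = (_, _) from hp] <;>
        simp <;>
        tauto
  · -- left_inv
    intro e he
    beta_reduce
    rcases mem_filter.mp he with ⟨-, hF⟩
    unfold Fx at hF
    by_cases h1 : e.1.1 ∈ S <;> by_cases h2 : e.1.2 ∈ S
    · exact absurd (Or.inl ⟨h1, h2⟩) hF
    · by_cases h1s : e.1.1 = s
      · rw [if_pos h1s, dif_neg h2]
        apply edge_unique (show s ≠ e.1.2 from fun hc => h2 (hc ▸ hs))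
          (mkEdge_inc_left _ _ _) (mkEdge_inc_right _ _ _) (Or.inl h1s) (Or.inr rfl)
      · have h2t : e.1.2 = t := by
          by_contra h2t
          exact hF (Or.inr (Or.inr (Or.inl ⟨h1, h1s, h2, h2t⟩)))
        rw [if_neg h1s, if_neg (fun hc : e.1.2 = s => h2 (hc ▸ hs)),
          if_neg (fun hc : e.1.1 = t => ht (hc ▸ h1)), dif_pos h1]
        apply edge_unique (show e.1.1 ≠ t from fun hc => ht (hc ▸ h1))
          (mkEdge_inc_left _ _ _) (mkEdge_inc_right _ _ _) (Or.inl rfl) (Or.inr h2t)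
    · by_cases h2s : e.1.2 = s
      · rw [if_neg (fun hc : e.1.1 = s => h1 (hc ▸ hs)), if_pos h2s, dif_neg h1]
        apply edge_unique (show s ≠ e.1.1 from fun hc => h1 (hc ▸ hs))
          (mkEdge_inc_left _ _ _) (mkEdge_inc_right _ _ _) (Or.inr h2s) (Or.inl rfl)
      · have h1t : e.1.1 = t := by
          by_contra h1t
          exact hF (Or.inr (Or.inr (Or.inr ⟨h2, h2s, h1, h1t⟩)))
        rw [if_neg (fun hc : e.1.1 = s => h1 (hc ▸ hs)), if_neg h2s, if_pos h1t, dif_pos h2]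
        apply edge_unique (show e.1.2 ≠ t from fun hc => ht (hc ▸ h2))
          (mkEdge_inc_left _ _ _) (mkEdge_inc_right _ _ _) (Or.inr rfl) (Or.inl h1t)
    · exact absurd (Or.inr (Or.inl ⟨h1, h2⟩)) hF
  · -- right_inv
    intro u hu
    beta_reduce
    rcases mem_erase.mp hu with ⟨hus, -⟩
    by_cases huS : u ∈ S
    · rw [dif_pos huS]
      have hut : u ≠ t := fun hc => ht (hc ▸ huS)
      have hts : t ≠ s := fun hc => ht (hc ▸ hs)
      rcases mkEdge_cases u t hut with hp|hp <;> rw [show _ = (_, _) from hp] <;> simp_all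
    · rw [dif_neg huS]
      have hsu : s ≠ u := fun hc => huS (hc ▸ hs)
      rcases mkEdge_cases s u hsu with hp|hp <;> rw [show _ = (_, _) from hp] <;> simp_all
lemma count_Fx {n : ℕ} (S : Finset (Fin n)) (s t : Fin n) (hs : s ∈ S) (ht : t ∉ S) :
    (univ.filter (Fx S s t)).card = (n - 1).choose 2 := by
  have h1 := Finset.card_filter_add_card_filter_not
    (s := (univ : Finset (EdgeIdx n))) (p := Fx S s t)
  rw [count_notFx S s t hs ht, card_edges] at h1
  have hn : 0 < n := t.pos
  obtain ⟨m, rfl⟩ : ∃ m, n = m + 1 := ⟨n - 1, by omega⟩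
  have hch : (m + 1).choose 2 = m.choose 1 + m.choose 2 := Nat.choose_succ_succ m 1
  rw [Nat.choose_one_right] at hch
  have hm1 : m + 1 - 1 = m := rfl
  rw [hm1] at h1 ⊢
  rw [hch] at h1
  rw [Nat.add_comm m (m.choose 2)] at h1
  exact Nat.add_right_cancel h1

lemma tri_identity (a b : ℕ) :
    (a + 1).choose 2 + (b + 1).choose 2 + a * b = (a + b + 1).choose 2 := by
  induction a with
  | zero => simp
  | succ a ih =>
    have h1 : (a + 1 + 1).choose 2 = (a + 1).choose 1 + (a + 1).choose 2 :=
      Nat.choose_succ_succ _ _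
    have h2 : (a + 1 + b + 1).choose 2 = (a + b + 1).choose 1 + (a + b + 1).choose 2 := by
      have he : a + 1 + b + 1 = (a + b + 1) + 1 := by ring
      rw [he]
      exact Nat.choose_succ_succ _ _
    rw [Nat.choose_one_right] at h1 h2
    have hm : (a + 1) * b = a * b + b := by ring
    rw [h1, h2, hm]
    generalize (a + 1).choose 2 = A at *
    generalize (b + 1).choose 2 = B at *
    generalize (a + b + 1).choose 2 = C at *
    generalize a * b = P at *
    omega

lemma num_card {n : ℕ} (S : Finset (Fin n)) (hcard : Even S.card) (s t : Fin n)
    (hs : s ∈ S) (ht : t ∉ S) (g1 g2 g3 : EdgeIdx n → Bool) :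
    (Finset.univ.filter fun g : EdgeIdx n → Bool =>
        oddSet n g = S ∧
        (∀ e : EdgeIdx n, e.1.1 ∈ S → e.1.2 ∈ S → g e = g1 e) ∧
        (∀ e : EdgeIdx n, e.1.1 ∉ S → e.1.2 ∉ S → g e = g2 e) ∧
        (∀ e : EdgeIdx n,
          ((e.1.1 ∈ S ∧ e.1.1 ≠ s ∧ e.1.2 ∉ S ∧ e.1.2 ≠ t) ∨
           (e.1.2 ∈ S ∧ e.1.2 ≠ s ∧ e.1.1 ∉ S ∧ e.1.1 ≠ t)) → g e = g3 e)).card = 1 := by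
  classical
  set τ : {e : EdgeIdx n // Fx S s t e} → Bool := fun E =>
    if E.1.1.1 ∈ S ∧ E.1.1.2 ∈ S then g1 E.1
    else if E.1.1.1 ∉ S ∧ E.1.1.2 ∉ S then g2 E.1 else g3 E.1 with hτ
  have pred_iff : ∀ g : EdgeIdx n → Bool,
      ((∀ e : EdgeIdx n, e.1.1 ∈ S → e.1.2 ∈ S → g e = g1 e) ∧
       (∀ e : EdgeIdx n, e.1.1 ∉ S → e.1.2 ∉ S → g e = g2 e) ∧
       (∀ e : EdgeIdx n,
          ((e.1.1 ∈ S ∧ e.1.1 ≠ s ∧ e.1.2 ∉ S ∧ e.1.2 ≠ t) ∨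
           (e.1.2 ∈ S ∧ e.1.2 ≠ s ∧ e.1.1 ∉ S ∧ e.1.1 ≠ t)) → g e = g3 e))
      ↔ ∀ E : {e : EdgeIdx n // Fx S s t e}, g E.1 = τ E := by
    intro g
    constructor
    · rintro ⟨f1, f2, f3⟩ ⟨e, hF⟩
      simp only [hτ]
      by_cases h1 : e.1.1 ∈ S ∧ e.1.2 ∈ S
      · rw [if_pos h1]; exact f1 e h1.1 h1.2
      · rw [if_neg h1]
        by_cases h2 : e.1.1 ∉ S ∧ e.1.2 ∉ S
        · rw [if_pos h2]; exact f2 e h2.1 h2.2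
        · rw [if_neg h2]
          apply f3
          unfold Fx at hF
          tauto
    · intro hg
      refine ⟨?_, ?_, ?_⟩
      · intro e he1 he2
        have h := hg ⟨e, Or.inl ⟨he1, he2⟩⟩
        simp only [hτ, if_pos (⟨he1, he2⟩ : e.1.1 ∈ S ∧ e.1.2 ∈ S)] at h
        exact h
      · intro e he1 he2
        have h := hg ⟨e, Or.inr (Or.inl ⟨he1, he2⟩)⟩
        simp only [hτ, if_neg (fun hc : e.1.1 ∈ S ∧ e.1.2 ∈ S => he1 hc.1),
          if_pos (⟨he1, he2⟩ : e.1.1 ∉ S ∧ e.1.2 ∉ S)] at h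
        exact h
      · intro e hc3
        have hF : Fx S s t e := Or.inr (Or.inr hc3)
        have h := hg ⟨e, hF⟩
        have hn1 : ¬(e.1.1 ∈ S ∧ e.1.2 ∈ S) := by tauto
        have hn2 : ¬(e.1.1 ∉ S ∧ e.1.2 ∉ S) := by tauto
        simp only [hτ, if_neg hn1, if_neg hn2] at h
        exact h
  set D := univ.filter fun g : EdgeIdx n → Bool => oddSet n g = S with hD
  have hDcard : D.card = 2 ^ ((n - 1).choose 2) := den_card S t ht hcard
  set ρ : (EdgeIdx n → Bool) → ({e : EdgeIdx n // Fx S s t e} → Bool) :=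
    fun g E => g E.1 with hρ
  have hinj : ∀ g ∈ D, ∀ g' ∈ D, ρ g = ρ g' → g = g' := by
    intro g hg g' hg' hρeq
    apply inj_on_fixed hs ht (mem_filter.mp hg).2 (mem_filter.mp hg').2
    intro e hF
    exact congrFun hρeq ⟨e, hF⟩
  have himg : D.image ρ = univ := by
    apply Finset.eq_univ_of_card
    rw [Finset.card_image_of_injOn
      (fun g hg g' hg' => hinj g (Finset.mem_coe.mp hg) g' (Finset.mem_coe.mp hg')), hDcard,
      Fintype.card_fun, Fintype.card_bool, Fintype.card_subtype, count_Fx S s t hs ht]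
  have hτmem : τ ∈ D.image ρ := by rw [himg]; exact mem_univ τ
  obtain ⟨g₀, hg₀D, hg₀τ⟩ := Finset.mem_image.mp hτmem
  rw [Finset.card_eq_one]
  refine ⟨g₀, ?_⟩
  ext g
  rw [mem_filter, Finset.mem_singleton]
  constructor
  · rintro ⟨-, hodd, hfix⟩
    apply hinj g (mem_filter.mpr ⟨mem_univ _, hodd⟩) g₀ hg₀D
    rw [hg₀τ]
    funext E
    exact (pred_iff g).mp hfix E
  · rintro rfl
    have hodd := (mem_filter.mp hg₀D).2
    exact ⟨mem_univ _, hodd, (pred_iff _).mpr (fun E => congrFun hg₀τ E)⟩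

end Stmt6

/-- Let `G ∼ G(n, 1/2)`, fix `S ⊆ V` with `|S| = k` even, `0 < k < n`,
and vertices `s ∈ S`, `t ∉ S`.  Conditioned on the odd-degree vertex set of `G`
being exactly `S`, the triple (induced subgraph on `S`, induced subgraph on the
complement of `S`, bipartite graph of edges between `S \ {s}` and `S̄ \ {t}`)
is distributed as independent uniform samples; i.e. for any fixed configurations
`g1, g2, g3` of those three edge-sets, the conditional probability of matching all
three is `(1/2)^{C(k,2)} · (1/2)^{C(n−k,2)} · (1/2)^{(k−1)(n−k−1)}`. -/
theorem stmt_6 (n k : ℕ) (hke : Even k) (hk0 : 0 < k) (hkn : k < n)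
    (S : Finset (Fin n)) (hS : S.card = k) (s t : Fin n) (hs : s ∈ S) (ht : t ∉ S)
    (g1 g2 g3 : EdgeIdx n → Bool) :
    ((Finset.univ.filter fun g : EdgeIdx n → Bool =>
        oddSet n g = S ∧
        (∀ e : EdgeIdx n, e.1.1 ∈ S → e.1.2 ∈ S → g e = g1 e) ∧
        (∀ e : EdgeIdx n, e.1.1 ∉ S → e.1.2 ∉ S → g e = g2 e) ∧
        (∀ e : EdgeIdx n,
          ((e.1.1 ∈ S ∧ e.1.1 ≠ s ∧ e.1.2 ∉ S ∧ e.1.2 ≠ t) ∨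
           (e.1.2 ∈ S ∧ e.1.2 ≠ s ∧ e.1.1 ∉ S ∧ e.1.1 ≠ t)) → g e = g3 e)).card : ℚ)
      / ((Finset.univ.filter fun g : EdgeIdx n → Bool => oddSet n g = S).card : ℚ)
    = (1 / 2 : ℚ) ^ k.choose 2 * (1 / 2 : ℚ) ^ (n - k).choose 2
        * (1 / 2 : ℚ) ^ ((k - 1) * (n - k - 1)) := by

  have hcard : Even S.card := by rw [hS]; exact hke
  have hM : k.choose 2 + (n - k).choose 2 + (k - 1) * (n - k - 1) = (n - 1).choose 2 := by
    obtain ⟨a, rfl⟩ : ∃ a, k = a + 1 := ⟨k - 1, by omega⟩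
    obtain ⟨b, hb⟩ : ∃ b, n - (a + 1) = b + 1 := ⟨n - (a + 1) - 1, by omega⟩
    have hn1 : n - 1 = a + b + 1 := by omega
    have hk1 : a + 1 - 1 = a := rfl
    have hb1 : b + 1 - 1 = b := rfl
    rw [hb, hn1, hk1, hb1]
    exact Stmt6.tri_identity a b
  have hnum := Stmt6.num_card S hcard s t hs ht g1 g2 g3
  have hden := Stmt6.den_card S t ht hcard
  rw [hnum, hden]
  rw [← pow_add, ← pow_add, hM]
  push_cast
  rw [div_pow, one_pow]
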